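/- Let d = 2k with k ≥ 1. On the unit cube [0,1]^d, let r ∈ ℝ^d have r_i = −1 for 1 ≤ i ≤ k and r_i = −ε for k+1 ≤ i ≤ d with ε > 0, and let s = 0 be the cube vertex maximizing ⟨r, ·⟩. Let v be any vertex with exactly one nonzero coordinate among the first k coordinates and all of the last k coordinates equal to 1. Then ⟨r/‖r‖, (s − v)/‖s − v‖⟩ = (1 + kε)/(√k·√(1+ε²)·√(k+1)), which is at most 1/k for ε small enough. -/

import Mathlib

open scoped InnerProductSpace

lemma aux_sum1 (k : ℕ) (j0 : ℕ) (hj0 : j0 < k) (a c : ℝ) :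
    ∑ i : Fin (2 * k), (if (i : ℕ) < k then (if (i : ℕ) = j0 then a else 0) else c)
      = a + k * c := by
  rw [Fin.sum_univ_eq_sum_range (fun j => if j < k then (if j = j0 then a else 0) else c) (2*k),
    Finset.range_eq_Ico, ← Finset.sum_Ico_consecutive _ (Nat.zero_le k) (by omega : k ≤ 2*k),
    ← Finset.range_eq_Ico]
  have h1 : ∀ i ∈ Finset.range k,
      (if i < k then (if i = j0 then a else 0) else c) = (if i = j0 then a else 0) :=
    fun i hi => if_pos (Finset.mem_range.mp hi)
  have h2 : ∀ i ∈ Finset.Ico k (2 * k),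
      (if i < k then (if i = j0 then a else 0) else c) = c :=
    fun i hi => if_neg (by have := (Finset.mem_Ico.mp hi).1; omega)
  rw [Finset.sum_congr rfl h1, Finset.sum_congr rfl h2, Finset.sum_const, Nat.card_Ico,
    Finset.sum_ite_eq' (Finset.range k) j0 (fun _ => a), if_pos (Finset.mem_range.mpr hj0)]
  have h3 : 2 * k - k = k := by omega
  rw [h3, nsmul_eq_mul]

lemma aux_sum2 (k : ℕ) (a c : ℝ) :
    ∑ i : Fin (2 * k), (if (i : ℕ) < k then a else c) = k * a + k * c := by
  rw [Fin.sum_univ_eq_sum_range (fun j => if j < k then a else c) (2*k),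
    Finset.range_eq_Ico, ← Finset.sum_Ico_consecutive _ (Nat.zero_le k) (by omega : k ≤ 2*k),
    ← Finset.range_eq_Ico]
  have h1 : ∀ i ∈ Finset.range k, (if i < k then a else c) = a :=
    fun i hi => if_pos (Finset.mem_range.mp hi)
  have h2 : ∀ i ∈ Finset.Ico k (2 * k), (if i < k then a else c) = c :=
    fun i hi => if_neg (by have := (Finset.mem_Ico.mp hi).1; omega)
  rw [Finset.sum_congr rfl h1, Finset.sum_congr rfl h2, Finset.sum_const, Finset.sum_const,
    Nat.card_Ico, Finset.card_range]
  have h3 : 2 * k - k = k := by omega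
  rw [h3, nsmul_eq_mul, nsmul_eq_mul]

/-- Obtuse-pyramid computation on the unit cube (d = 2k): with `r_i = -1` for `i < k`,
`r_i = -ε` for `i ≥ k`, `s = 0` the maximizing vertex, and `v` a vertex with exactly one
nonzero among the first `k` coordinates and all of the last `k` coordinates equal to `1`,
`⟨r/‖r‖, (s-v)/‖s-v‖⟩ = (1 + kε)/(√k·√(1+ε²)·√(k+1))`, which is at most `1/k` for `ε`
small enough. -/
theorem stmt18 (k : ℕ) (hk : 1 ≤ k)
    (r : ℝ → EuclideanSpace ℝ (Fin (2 * k)))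
    (hr : ∀ (ε : ℝ) (i : Fin (2 * k)), r ε i = if (i : ℕ) < k then -1 else -ε)
    (v : EuclideanSpace ℝ (Fin (2 * k)))
    (hv1 : ∀ i : Fin (2 * k), k ≤ (i : ℕ) → v i = 1)
    (hv2 : ∃ i0 : Fin (2 * k), (i0 : ℕ) < k ∧ v i0 = 1 ∧
      ∀ i : Fin (2 * k), (i : ℕ) < k → i ≠ i0 → v i = 0) :
    (∀ ε : ℝ, 0 < ε →
      (∀ w : EuclideanSpace ℝ (Fin (2 * k)), (∀ i, w i = 0 ∨ w i = 1) →
        ⟪r ε, w⟫_ℝ ≤ ⟪r ε, (0 : EuclideanSpace ℝ (Fin (2 * k)))⟫_ℝ) ∧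
      ⟪‖r ε‖⁻¹ • r ε, ‖(0 : EuclideanSpace ℝ (Fin (2 * k))) - v‖⁻¹ •
          ((0 : EuclideanSpace ℝ (Fin (2 * k))) - v)⟫_ℝ =
        (1 + k * ε) / (Real.sqrt k * Real.sqrt (1 + ε ^ 2) * Real.sqrt (k + 1))) ∧
    ∃ ε0 : ℝ, 0 < ε0 ∧ ∀ ε : ℝ, 0 < ε → ε ≤ ε0 →
      (1 + k * ε) / (Real.sqrt k * Real.sqrt (1 + ε ^ 2) * Real.sqrt (k + 1)) ≤
        1 / (k : ℝ) := by
  obtain ⟨i0, hi0k, hvi0, hv0⟩ := hv2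
  have hkpos : (0:ℝ) < k := by exact_mod_cast hk
  -- norm of v
  have hnv : ‖v‖ = Real.sqrt (k + 1) := by
    rw [EuclideanSpace.norm_eq]
    congr 1
    have hterm : ∀ i : Fin (2 * k), ‖v i‖ ^ 2 =
        if (i:ℕ) < k then (if (i:ℕ) = (i0:ℕ) then (1:ℝ) else 0) else 1 := by
      intro i
      rw [Real.norm_eq_abs, sq_abs]
      by_cases h : (i:ℕ) < k
      · by_cases h2 : i = i0
        · subst h2; simp [h, hvi0]
        · have hne : (i:ℕ) ≠ (i0:ℕ) := fun hc => h2 (Fin.ext hc)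
          simp [h, hne, hv0 i h h2]
      · simp [h, hv1 i (le_of_not_gt h)]
    rw [Finset.sum_congr rfl fun i _ => hterm i, aux_sum1 k (i0:ℕ) hi0k 1 1]
    ring
  refine ⟨fun ε hε => ?_, ?_⟩
  · have hnr : ‖r ε‖ = Real.sqrt k * Real.sqrt (1 + ε ^ 2) := by
      rw [EuclideanSpace.norm_eq, ← Real.sqrt_mul hkpos.le]
      congr 1
      have hterm : ∀ i : Fin (2 * k), ‖r ε i‖ ^ 2 =
          if (i:ℕ) < k then (1:ℝ) else ε ^ 2 := by
        intro i
        rw [Real.norm_eq_abs, sq_abs, hr]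
        by_cases h : (i:ℕ) < k <;> simp [h] <;> ring
      rw [Finset.sum_congr rfl fun i _ => hterm i, aux_sum2 k 1 (ε ^ 2)]
      ring
    have hinner : ⟪r ε, v⟫_ℝ = -(1 + k * ε) := by
      rw [PiLp.inner_apply]
      simp only [RCLike.inner_apply, conj_trivial]
      have hterm : ∀ i : Fin (2 * k), r ε i * v i =
          if (i:ℕ) < k then (if (i:ℕ) = (i0:ℕ) then (-1:ℝ) else 0) else -ε := by
        intro i
        rw [hr]
        by_cases h : (i:ℕ) < k
        · by_cases h2 : i = i0
          · subst h2; simp [h, hvi0]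
          · have hne : (i:ℕ) ≠ (i0:ℕ) := fun hc => h2 (Fin.ext hc)
            simp [h, hne, hv0 i h h2]
        · simp [h, hv1 i (le_of_not_gt h)]
      rw [Finset.sum_congr rfl fun i _ => (mul_comm (v i) (r ε i)).trans (hterm i), aux_sum1 k (i0:ℕ) hi0k (-1) (-ε)]
      ring
    constructor
    · intro w hw
      rw [inner_zero_right, PiLp.inner_apply]
      simp only [RCLike.inner_apply, conj_trivial]
      apply Finset.sum_nonpos
      intro i _
      have h1 : r ε i ≤ 0 := by rw [hr]; split <;> linarith
      have h2 : 0 ≤ w i := by rcases hw i with h | h <;> rw [h] <;> norm_num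
      rw [mul_comm]; exact mul_nonpos_of_nonpos_of_nonneg h1 h2
    · rw [real_inner_smul_left, real_inner_smul_right, zero_sub, norm_neg,
        inner_neg_right, hinner, hnr, hnv]
      have h1 : Real.sqrt k ≠ 0 := by positivity
      have h2 : Real.sqrt (1 + ε ^ 2) ≠ 0 := by positivity
      have h3 : Real.sqrt ((k:ℝ) + 1) ≠ 0 := by positivity
      field_simp
  · set c := Real.sqrt ((k:ℝ) * (k + 1)) with hc
    have hck : (k:ℝ) < c := by
      have hkk : (k:ℝ) = Real.sqrt ((k:ℝ)^2) := by rw [Real.sqrt_sq hkpos.le]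
      rw [hkk, hc]
      apply Real.sqrt_lt_sqrt (by positivity)
      nlinarith
    have hk2 : (0:ℝ) < (k:ℝ)^2 := by positivity
    refine ⟨(c - k) / k ^ 2, div_pos (by linarith) hk2, fun ε hε hε0 => ?_⟩
    have hD : 0 < Real.sqrt k * Real.sqrt (1 + ε ^ 2) * Real.sqrt ((k:ℝ) + 1) := by positivity
    rw [div_le_div_iff₀ hD hkpos]
    have h1 : 1 ≤ Real.sqrt (1 + ε ^ 2) := by
      have := Real.sqrt_le_sqrt (show (1:ℝ) ≤ 1 + ε ^ 2 by nlinarith)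
      rwa [Real.sqrt_one] at this
    have h2 : Real.sqrt k * Real.sqrt ((k:ℝ) + 1) = c := by
      rw [hc, Real.sqrt_mul hkpos.le]
    have h3 : (1 + k * ε) * k ≤ c := by
      have h4 : ε * (k:ℝ)^2 ≤ c - k := (le_div_iff₀ hk2).mp hε0
      nlinarith
    calc (1 + (k:ℝ) * ε) * k ≤ c := h3
      _ = Real.sqrt k * 1 * Real.sqrt ((k:ℝ)+1) := by rw [← h2]; ring
      _ ≤ Real.sqrt k * Real.sqrt (1 + ε^2) * Real.sqrt ((k:ℝ)+1) := by gcongr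
      _ = 1 * (Real.sqrt k * Real.sqrt (1 + ε^2) * Real.sqrt ((k:ℝ)+1)) := by ring
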